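/- Let (L, {α}, L^∨, {α^∨}) be a rank-n root datum of semisimple rank one. If the map ⟨α^∨, ·⟩ : L → ℤ takes only even values, then L decomposes as the direct sum of the kernel of ⟨α^∨, ·⟩ and the subgroup generated by α. -/

import Mathlib

/-- The linear functional `⟨α^∨, ·⟩ : L → ℤ` on the lattice `L = ℤ^n` given by pairing
with a fixed covector `αv`. -/
noncomputable def corootPairing (n : ℕ) (αv : Fin n → ℤ) : (Fin n → ℤ) →ₗ[ℤ] ℤ where
  toFun x := dotProduct αv x
  map_add' x y := by simp [dotProduct, mul_add, Finset.sum_add_distrib]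
  map_smul' c x := by
    simp [dotProduct, Finset.mul_sum, mul_comm, mul_left_comm]

/-- If, in a rank-`n` root datum of semisimple rank one with `⟨α^∨, α⟩ = 2`, the map
`⟨α^∨, ·⟩ : L → ℤ` takes only even values, then `L` is the direct sum of the kernel of
`⟨α^∨, ·⟩` and the subgroup generated by `α`. -/
theorem stmt_5 (n : ℕ) (α αv : Fin n → ℤ)
    (h2 : dotProduct αv α = 2) (heven : ∀ x : Fin n → ℤ, 2 ∣ dotProduct αv x) :
    IsCompl (LinearMap.ker (corootPairing n αv)) (Submodule.span ℤ {α}) := by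
  have hpα : corootPairing n αv α = 2 := h2
  constructor
  · rw [Submodule.disjoint_def]
    intro x hx hxs
    obtain ⟨c, rfl⟩ := Submodule.mem_span_singleton.mp hxs
    have hker : corootPairing n αv (c • α) = 0 := hx
    rw [map_smul, hpα, smul_eq_mul] at hker
    have : c = 0 := by omega
    simp [this]
  · rw [codisjoint_iff, eq_top_iff]
    intro x _
    obtain ⟨k, hk⟩ := heven x
    have hmem : x - k • α ∈ LinearMap.ker (corootPairing n αv) := by
      rw [LinearMap.mem_ker, map_sub, map_smul, hpα, smul_eq_mul]
      show dotProduct αv x - k * 2 = 0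
      omega
    have : x = (x - k • α) + k • α := by ring
    rw [this]
    exact Submodule.add_mem _ (Submodule.mem_sup_left hmem)
      (Submodule.mem_sup_right (Submodule.smul_mem _ k (Submodule.mem_span_singleton_self α)))
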